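/- Let $(V,\langle\cdot,\cdot\rangle)$ be a real inner product space and let $X,Y\in V$ with $\|X\|<1$ and $\|Y\|<1$. If $\left\langle \frac{X}{\sqrt{1-\|X\|^2}}-\frac{Y}{\sqrt{1-\|Y\|^2}},\, X-Y\right\rangle = 0$, then $X=Y$. -/

import Mathlib

/-- Equality case of the monotonicity of `X ↦ X/√(1-‖X‖²)`:
if the inner product vanishes, then `X = Y`. -/
theorem stmt_1 {V : Type*} [NormedAddCommGroup V] [InnerProductSpace ℝ V]
    (X Y : V) (hX : ‖X‖ < 1) (hY : ‖Y‖ < 1)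
    (h : (inner ℝ ((1 / Real.sqrt (1 - ‖X‖ ^ 2)) • X - (1 / Real.sqrt (1 - ‖Y‖ ^ 2)) • Y)
      (X - Y) : ℝ) = 0) :
    X = Y := by
  set a := 1 / Real.sqrt (1 - ‖X‖ ^ 2) with ha
  set b := 1 / Real.sqrt (1 - ‖Y‖ ^ 2) with hb
  have hX2 : (0:ℝ) < 1 - ‖X‖ ^ 2 := by nlinarith [norm_nonneg X]
  have hY2 : (0:ℝ) < 1 - ‖Y‖ ^ 2 := by nlinarith [norm_nonneg Y]
  have hapos : 0 < a := by rw [ha]; positivity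
  have hbpos : 0 < b := by rw [hb]; positivity
  have hexp : (inner ℝ (a • X - b • Y) (X - Y) : ℝ)
      = a * ‖X‖ ^ 2 - (a + b) * inner ℝ X Y + b * ‖Y‖ ^ 2 := by
    simp only [inner_sub_left, inner_sub_right, real_inner_smul_left,
      real_inner_self_eq_norm_sq, real_inner_comm Y X]
    ring
  have e1 : ‖X - Y‖ ^ 2 = ‖X‖ ^ 2 - 2 * inner ℝ X Y + ‖Y‖ ^ 2 := by
    rw [norm_sub_sq_real]
  have hsign : 0 ≤ (a - b) * (‖X‖ ^ 2 - ‖Y‖ ^ 2) := by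
    rcases le_total ‖X‖ ‖Y‖ with h' | h'
    · have h1 : a ≤ b := by
        rw [ha, hb]
        apply one_div_le_one_div_of_le (Real.sqrt_pos.mpr hY2)
        exact Real.sqrt_le_sqrt (by nlinarith [norm_nonneg X])
      have h2 : ‖X‖ ^ 2 ≤ ‖Y‖ ^ 2 := by nlinarith [norm_nonneg X]
      nlinarith
    · have h1 : b ≤ a := by
        rw [ha, hb]
        apply one_div_le_one_div_of_le (Real.sqrt_pos.mpr hX2)
        exact Real.sqrt_le_sqrt (by nlinarith [norm_nonneg Y])
      have h2 : ‖Y‖ ^ 2 ≤ ‖X‖ ^ 2 := by nlinarith [norm_nonneg Y]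
      nlinarith
  have hz : ‖X - Y‖ ^ 2 = 0 := by
    rw [hexp] at h
    nlinarith [sq_nonneg ‖X - Y‖]
  have : X - Y = 0 := by
    have := pow_eq_zero_iff (n := 2) (by norm_num) |>.mp hz
    exact norm_eq_zero.mp this
  exact sub_eq_zero.mp this
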